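/- If G and H are reconstructions of each other with at least three vertices, then for every k with 3 ≤ k < |V(G)|, G and H contain the same number of cycles of length k (as subgraphs). -/

import Mathlib

open SimpleGraph

def IsReconstruction {V W : Type*} (G : SimpleGraph V) (H : SimpleGraph W) : Prop :=
  ∃ f : V ≃ W, ∀ v : V,
    Nonempty ((G.induce {w | w ≠ v}) ≃g (H.induce {w | w ≠ f v}))

/-- `subCount F G` is the number of subgraphs of `G` isomorphic to `F`. -/
noncomputable def subCount {U V : Type*} (F : SimpleGraph U) (G : SimpleGraph V) : ℕ :=
  Nat.card {G' : G.Subgraph // Nonempty (F ≃g G'.coe)}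

section Aux

variable {U V W : Type*}

instance finiteSubgraph [Finite V] (G : SimpleGraph V) : Finite G.Subgraph := by
  have h : Function.Injective (fun S : G.Subgraph => (S.verts, S.Adj)) := by
    intro S T hST
    rw [Prod.mk.injEq] at hST
    exact Subgraph.ext hST.1 hST.2
  exact Finite.of_injective _ h

/-- Mapping a subgraph along a graph isomorphism gives an isomorphic coercion. -/
noncomputable def mapCoeIso {G : SimpleGraph V} {G' : SimpleGraph W} (e : G ≃g G')
    (S : G.Subgraph) : S.coe ≃g (S.map e.toHom).coe where
  toEquiv := e.toEquiv.image S.verts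
  map_rel_iff' := by
    rintro ⟨a, ha⟩ ⟨b, hb⟩
    simp only [Equiv.image_apply_coe, Subgraph.coe_adj, Subgraph.map_adj, Relation.Map]
    constructor
    · rintro ⟨u, v, h, hu, hv⟩
      rwa [e.toEquiv.injective hu, e.toEquiv.injective hv] at h
    · intro h
      exact ⟨a, b, h, rfl, rfl⟩

lemma map_symm_map {G : SimpleGraph V} {G' : SimpleGraph W} (e : G ≃g G') (S : G.Subgraph) :
    (S.map e.toHom).map e.symm.toHom = S := by
  rw [← Subgraph.map_comp]
  have : e.symm.toHom.comp e.toHom = Hom.id := by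
    ext v; simp
  rw [this, Subgraph.map_id]

noncomputable def subCountEquiv (F : SimpleGraph U) {G : SimpleGraph V} {G' : SimpleGraph W}
    (e : G ≃g G') :
    {S : G.Subgraph // Nonempty (F ≃g S.coe)} ≃ {S : G'.Subgraph // Nonempty (F ≃g S.coe)} where
  toFun S := ⟨S.1.map e.toHom, S.2.map fun i => i.trans (mapCoeIso e S.1)⟩
  invFun S := ⟨S.1.map e.symm.toHom, S.2.map fun i => i.trans (mapCoeIso e.symm S.1)⟩
  left_inv S := Subtype.ext (map_symm_map e S.1)
  right_inv S := Subtype.ext (by simpa using map_symm_map e.symm S.1)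

lemma subCount_congr (F : SimpleGraph U) {G : SimpleGraph V} {G' : SimpleGraph W}
    (e : G ≃g G') : subCount F G = subCount F G' :=
  Nat.card_congr (subCountEquiv F e)

/-- Lift a subgraph of an induced subgraph to a subgraph of the ambient graph. -/
def liftSub {G : SimpleGraph V} {s : Set V} (S : (G.induce s).Subgraph) : G.Subgraph where
  verts := Subtype.val '' S.verts
  Adj a b := ∃ (ha : a ∈ s) (hb : b ∈ s), S.Adj ⟨a, ha⟩ ⟨b, hb⟩
  adj_sub := by rintro a b ⟨ha, hb, h⟩; exact S.adj_sub h
  edge_vert := by rintro a b ⟨ha, hb, h⟩; exact ⟨⟨a, ha⟩, S.edge_vert h, rfl⟩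
  symm := ⟨by rintro a b ⟨ha, hb, h⟩; exact ⟨hb, ha, h.symm⟩⟩

lemma liftSub_verts_subset {G : SimpleGraph V} {s : Set V} (S : (G.induce s).Subgraph) :
    (liftSub S).verts ⊆ s := by
  rintro a ⟨x, _, rfl⟩; exact x.2

/-- The lift has an isomorphic coercion. -/
noncomputable def liftSubIso {G : SimpleGraph V} {s : Set V} (S : (G.induce s).Subgraph) :
    S.coe ≃g (liftSub S).coe where
  toEquiv := (Equiv.Set.image Subtype.val S.verts Subtype.val_injective)
  map_rel_iff' := by
    rintro ⟨⟨a, has⟩, ha⟩ ⟨⟨b, hbs⟩, hb⟩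
    simp only [Equiv.Set.image, Equiv.Set.imageOfInjOn, Subgraph.coe_adj]
    constructor
    · rintro ⟨ha', hb', h⟩; exact h
    · intro h; exact ⟨has, hbs, h⟩

/-- Restrict a subgraph with vertices inside `s` to a subgraph of the induced graph. -/
def restrictSub {G : SimpleGraph V} {s : Set V} (S : G.Subgraph) (hsub : S.verts ⊆ s) :
    (G.induce s).Subgraph where
  verts := {x : s | x.1 ∈ S.verts}
  Adj x y := S.Adj x.1 y.1
  adj_sub := by intro x y h; exact S.adj_sub h
  edge_vert := by intro x y h; exact S.edge_vert h
  symm := ⟨by intro x y h; exact h.symm⟩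

lemma liftSub_restrictSub {G : SimpleGraph V} {s : Set V} (S : G.Subgraph)
    (hsub : S.verts ⊆ s) : liftSub (restrictSub S hsub) = S := by
  ext a b
  · constructor
    · rintro ⟨x, hx, rfl⟩; exact hx
    · intro ha; exact ⟨⟨a, hsub ha⟩, ha, rfl⟩
  · show (∃ _ _, _) ↔ _
    constructor
    · rintro ⟨_, _, h⟩; exact h
    · intro h; exact ⟨hsub (S.edge_vert h), hsub (S.edge_vert h.symm), h⟩

lemma restrictSub_liftSub {G : SimpleGraph V} {s : Set V} (S : (G.induce s).Subgraph) :
    restrictSub (liftSub S) (liftSub_verts_subset S) = S := by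
  ext x y
  · show x.1 ∈ Subtype.val '' S.verts ↔ _
    rw [Subtype.val_injective.mem_set_image]
  · show (∃ _ _, _) ↔ _
    constructor
    · rintro ⟨_, _, h⟩; exact h
    · intro h; exact ⟨x.2, y.2, h⟩

noncomputable def induceSubEquiv (F : SimpleGraph U) (G : SimpleGraph V) (s : Set V) :
    {S : (G.induce s).Subgraph // Nonempty (F ≃g S.coe)} ≃
    {S : G.Subgraph // Nonempty (F ≃g S.coe) ∧ S.verts ⊆ s} where
  toFun S := ⟨liftSub S.1, S.2.map fun i => i.trans (liftSubIso S.1), liftSub_verts_subset S.1⟩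
  invFun S := ⟨restrictSub S.1 S.2.2, by
    obtain ⟨i⟩ := S.2.1
    have e : (liftSub (restrictSub S.1 S.2.2)).coe ≃g S.1.coe := by
      rw [liftSub_restrictSub]
    exact ⟨i.trans ((liftSubIso _).trans e).symm⟩⟩
  left_inv S := Subtype.ext (restrictSub_liftSub S.1)
  right_inv S := Subtype.ext (liftSub_restrictSub S.1 S.2.2)

lemma verts_card [Finite V] {G : SimpleGraph V} [Fintype U] (F : SimpleGraph U)
    (S : G.Subgraph) (h : Nonempty (F ≃g S.coe)) : Nat.card S.verts = Fintype.card U := by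
  obtain ⟨i⟩ := h
  rw [Nat.card_congr i.toEquiv.symm, Nat.card_eq_fintype_card]

lemma card_compl_set [Fintype V] (s : Set V) :
    Nat.card {v : V // v ∉ s} = Fintype.card V - Nat.card s := by
  classical
  rw [Nat.card_eq_fintype_card, Nat.card_eq_fintype_card (α := s)]
  exact Fintype.card_subtype_compl _

/-- Kelly's counting identity. -/
lemma sum_subCount [Fintype V] [Fintype U] (F : SimpleGraph U) (G : SimpleGraph V) :
    ∑ v : V, subCount F (G.induce {w | w ≠ v}) =
      subCount F G * (Fintype.card V - Fintype.card U) := by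
  classical
  have e1 : ∀ v : V,
      {S : (G.induce {w | w ≠ v}).Subgraph // Nonempty (F ≃g S.coe)} ≃
      {S : G.Subgraph // Nonempty (F ≃g S.coe) ∧ v ∉ S.verts} := fun v =>
    (induceSubEquiv F G {w | w ≠ v}).trans (Equiv.subtypeEquivRight (fun S => by
      constructor
      · rintro ⟨h1, h2⟩
        exact ⟨h1, fun hv => (h2 hv) rfl⟩
      · rintro ⟨h1, h2⟩
        exact ⟨h1, fun a ha h => h2 (h ▸ ha)⟩))
  have e2 : (Σ v : V, {S : G.Subgraph // Nonempty (F ≃g S.coe) ∧ v ∉ S.verts}) ≃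
      (Σ S : {S : G.Subgraph // Nonempty (F ≃g S.coe)}, {v : V // v ∉ S.1.verts}) :=
    ⟨fun x => ⟨⟨x.2.1, x.2.2.1⟩, ⟨x.1, x.2.2.2⟩⟩, fun x => ⟨x.2.1, ⟨x.1.1, x.1.2, x.2.2⟩⟩,
      fun x => rfl, fun x => rfl⟩
  letI iC : Fintype {S : G.Subgraph // Nonempty (F ≃g S.coe)} := Fintype.ofFinite _
  letI iA : ∀ v : V, Fintype {S : G.Subgraph // Nonempty (F ≃g S.coe) ∧ v ∉ S.verts} :=
    fun v => Fintype.ofFinite _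
  letI iD : ∀ S : {S : G.Subgraph // Nonempty (F ≃g S.coe)},
      Fintype {v : V // v ∉ S.1.verts} := fun S => Fintype.ofFinite _
  calc
    ∑ v : V, subCount F (G.induce {w | w ≠ v})
        = ∑ v : V, Nat.card {S : G.Subgraph // Nonempty (F ≃g S.coe) ∧ v ∉ S.verts} := by
          refine Finset.sum_congr rfl fun v _ => ?_
          exact Nat.card_congr (e1 v)
    _ = Nat.card (Σ v : V, {S : G.Subgraph // Nonempty (F ≃g S.coe) ∧ v ∉ S.verts}) := by
          rw [Nat.card_eq_fintype_card, Fintype.card_sigma]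
          exact Finset.sum_congr rfl fun v _ => Nat.card_eq_fintype_card
    _ = Nat.card (Σ S : {S : G.Subgraph // Nonempty (F ≃g S.coe)}, {v : V // v ∉ S.1.verts}) :=
          Nat.card_congr e2
    _ = ∑ S : {S : G.Subgraph // Nonempty (F ≃g S.coe)}, Nat.card {v : V // v ∉ S.1.verts} := by
          rw [Nat.card_eq_fintype_card, Fintype.card_sigma]
          exact Finset.sum_congr rfl fun S _ => Nat.card_eq_fintype_card.symm
    _ = ∑ _S : {S : G.Subgraph // Nonempty (F ≃g S.coe)},
          (Fintype.card V - Fintype.card U) := by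
          refine Finset.sum_congr rfl fun S _ => ?_
          rw [card_compl_set, verts_card F S.1 S.2]
    _ = subCount F G * (Fintype.card V - Fintype.card U) := by
          rw [Finset.sum_const, Finset.card_univ, smul_eq_mul, subCount,
            Nat.card_eq_fintype_card]

end Aux

/-- Reconstructions contain the same number of cycles of each length `k < |V(G)|`. -/
theorem stmt_17 {V W : Type*} [Fintype V] [Fintype W]
    (G : SimpleGraph V) (H : SimpleGraph W)
    (hrec : IsReconstruction G H) (hcard : 3 ≤ Fintype.card V) :
    ∀ k : ℕ, 3 ≤ k → k < Fintype.card V →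
      subCount (SimpleGraph.cycleGraph k) G = subCount (SimpleGraph.cycleGraph k) H := by
  intro k _hk3 hkn
  obtain ⟨f, hf⟩ := hrec
  have hcardVW : Fintype.card V = Fintype.card W := Fintype.card_congr f
  have hsum : ∑ v : V, subCount (SimpleGraph.cycleGraph k) (G.induce {w | w ≠ v}) =
      ∑ w : W, subCount (SimpleGraph.cycleGraph k) (H.induce {x | x ≠ w}) := by
    rw [← f.sum_comp (fun w => subCount (SimpleGraph.cycleGraph k) (H.induce {x | x ≠ w}))]
    refine Finset.sum_congr rfl fun v _ => ?_
    exact subCount_congr _ (hf v).some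
  have hG := sum_subCount (SimpleGraph.cycleGraph k) G
  have hH := sum_subCount (SimpleGraph.cycleGraph k) H
  rw [Fintype.card_fin] at hG hH
  rw [hG, hH, ← hcardVW] at hsum
  have hpos : 0 < Fintype.card V - k := Nat.sub_pos_of_lt hkn
  exact Nat.eq_of_mul_eq_mul_right hpos hsum
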